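/- Let (X_1, Y_1), …, (X_{n+1}, Y_{n+1}) be random pairs with X_i taking values in ℝ^d and Y_i in ℝ, whose joint distribution is exchangeable, i.e., invariant under every permutation of the indices {1, …, n+1}. Let ρ : ℝ^d × ℝ → ℝ be a measurable function, set R_i = ρ(X_i, Y_i) for each i, let 0 < α < 1 satisfy ⌈(1−α)(n+1)⌉ ≤ n, and let r̂ = R_{(⌈(1−α)(n+1)⌉)} be the ⌈(1−α)(n+1)⌉-th order statistic of R_1, …, R_n. Then Pr(Y_{n+1} ∈ C(X_{n+1})) ≥ 1 − α, where for x ∈ ℝ^d the set C(x) is defined as C(x) = {y ∈ ℝ : ρ(x, y) ≤ r̂}. -/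

import Mathlib

open MeasureTheory
open scoped ENNReal

/-- The `k`-th order statistic (1-based, counted with multiplicity) of the values
`v 0, …, v (m-1)`: the `k`-th smallest element of the list sorted in nondecreasing
order, with junk value `0` when `k` is out of range. -/
noncomputable def orderStat {m : ℕ} (v : Fin m → ℝ) (k : ℕ) : ℝ :=
  (List.insertionSort (· ≤ ·) (List.ofFn v)).getD (k - 1) 0

lemma sorted_le_getElem_iff_countP {l : List ℝ} (hs : l.Pairwise (· ≤ ·)) {j : ℕ}
    (hj : j < l.length) (r : ℝ) :
    r ≤ l[j] ↔ l.countP (fun x => decide (x < r)) ≤ j := by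
  constructor
  · intro hr
    have : l.countP (fun x => decide (x < r)) =
        (l.take j).countP (fun x => decide (x < r)) +
        (l.drop j).countP (fun x => decide (x < r)) := by
      conv_lhs => rw [← List.take_append_drop j l]
      rw [List.countP_append]
    rw [this]
    have hdrop : (l.drop j).countP (fun x => decide (x < r)) = 0 := by
      rw [List.countP_eq_zero]
      intro a ha
      obtain ⟨i, hi, rfl⟩ := List.mem_iff_getElem.mp ha
      rw [List.getElem_drop]
      simp only [decide_eq_true_eq, not_lt]
      refine le_trans hr ?_
      rcases Nat.eq_zero_or_pos i with h0 | h0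
      · subst h0; simp
      · exact hs.rel_get_of_lt (a := ⟨j, hj⟩)
          (b := ⟨j + i, by simp [List.length_drop] at hi; omega⟩) (by simp; omega)
    rw [hdrop, Nat.add_zero]
    calc (l.take j).countP (fun x => decide (x < r)) ≤ (l.take j).length :=
          List.countP_le_length
      _ ≤ j := by simp [List.length_take]
  · intro hc
    by_contra hlt
    push_neg at hlt
    have hlen : (l.take (j+1)).length = j + 1 := by simp [List.length_take]; omega
    have htake : (l.take (j+1)).countP (fun x => decide (x < r)) = j + 1 := by
      have hall : ∀ a ∈ l.take (j+1), (fun x => decide (x < r)) a = true := by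
        intro a ha
        obtain ⟨i, hi, rfl⟩ := List.mem_iff_getElem.mp ha
        rw [List.getElem_take]
        simp only [decide_eq_true_eq]
        have hij : i ≤ j := by rw [hlen] at hi; omega
        rcases eq_or_lt_of_le hij with h | h
        · subst h; exact hlt
        · exact lt_of_le_of_lt
            (hs.rel_get_of_lt (a := ⟨i, by omega⟩) (b := ⟨j, hj⟩) (by simpa)) hlt
      have := List.countP_eq_length.mpr hall
      rw [hlen] at this
      exact this
    have : j + 1 ≤ l.countP (fun x => decide (x < r)) := by
      conv_rhs => rw [← List.take_append_drop (j+1) l]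
      rw [List.countP_append, htake]
      omega
    omega

lemma countP_ofFn {m : ℕ} (v : Fin m → ℝ) (p : ℝ → Prop) [DecidablePred p] :
    (List.ofFn v).countP (fun x => decide (p x)) =
      (Finset.univ.filter fun i => p (v i)).card := by
  rw [List.ofFn_eq_map, List.countP_map, List.countP_eq_length_filter]
  rw [Fin.univ_def]
  simp [Finset.filter, Finset.card, Multiset.filter_coe]
  congr 1

lemma le_orderStat_iff {m : ℕ} (v : Fin m → ℝ) {k : ℕ} (hk1 : 1 ≤ k) (hkm : k ≤ m) (r : ℝ) :
    r ≤ orderStat v k ↔ (Finset.univ.filter fun i => v i < r).card < k := by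
  set l := List.insertionSort (· ≤ ·) (List.ofFn v) with hl
  have hlen : l.length = m := by simp [hl]
  have hs : l.Pairwise (· ≤ ·) := List.pairwise_insertionSort _ _
  have hj : k - 1 < l.length := by omega
  have hgd : orderStat v k = l[k-1] := by
    rw [orderStat, List.getD_eq_getElem _ _ hj]
  have hcount : l.countP (fun x => decide (x < r)) =
      (Finset.univ.filter fun i => v i < r).card := by
    rw [(List.perm_insertionSort (· ≤ ·) (List.ofFn v)).countP_eq]
    exact countP_ofFn v (fun x => x < r)
  rw [hgd, sorted_le_getElem_iff_countP hs hj r, hcount]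
  omega

lemma orderStat_count_ge {m : ℕ} (v : Fin m → ℝ) {k : ℕ} (hk1 : 1 ≤ k) (hkm : k ≤ m) :
    k ≤ (Finset.univ.filter fun j => v j ≤ orderStat v k).card := by
  set l := List.insertionSort (· ≤ ·) (List.ofFn v) with hl
  have hlen : l.length = m := by simp [hl]
  have hs : l.Pairwise (· ≤ ·) := List.pairwise_insertionSort _ _
  have hj : k - 1 < l.length := by omega
  have hgd : orderStat v k = l[k-1] := by
    rw [orderStat, List.getD_eq_getElem _ _ hj]
  have hcount : l.countP (fun x => decide (x ≤ orderStat v k)) =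
      (Finset.univ.filter fun j => v j ≤ orderStat v k).card := by
    rw [(List.perm_insertionSort (· ≤ ·) (List.ofFn v)).countP_eq]
    exact countP_ofFn v (fun x => x ≤ orderStat v k)
  rw [← hcount]
  have hlenk : (l.take k).length = k := by simp [List.length_take]; omega
  have htake : (l.take k).countP (fun x => decide (x ≤ orderStat v k)) = k := by
    have hall : ∀ a ∈ l.take k, (fun x => decide (x ≤ orderStat v k)) a = true := by
      intro a ha
      obtain ⟨i, hi, rfl⟩ := List.mem_iff_getElem.mp ha
      rw [List.getElem_take]
      simp only [decide_eq_true_eq, hgd]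
      have hik : i ≤ k - 1 := by rw [hlenk] at hi; omega
      rcases eq_or_lt_of_le hik with h | h
      · subst h; exact le_refl _
      · exact hs.rel_get_of_lt (a := ⟨i, by omega⟩) (b := ⟨k-1, hj⟩) (by simpa)
    have := List.countP_eq_length.mpr hall
    rw [hlenk] at this; exact this
  calc k = (l.take k).countP (fun x => decide (x ≤ orderStat v k)) := htake.symm
    _ ≤ l.countP (fun x => decide (x ≤ orderStat v k)) := by
        conv_rhs => rw [← List.take_append_drop k l]
        rw [List.countP_append]; omega

/-- Counting lemma: at most `m - k` indices have at least `k` strictly smaller values. -/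
lemma count_high_rank_le {m : ℕ} (v : Fin m → ℝ) {k : ℕ} (hk1 : 1 ≤ k) (hkm : k ≤ m) :
    (Finset.univ.filter fun j =>
      k ≤ (Finset.univ.filter fun i => v i < v j).card).card ≤ m - k := by
  have hpart := Finset.card_filter_add_card_filter_not
    (s := (Finset.univ : Finset (Fin m)))
    (p := fun j => k ≤ (Finset.univ.filter fun i => v i < v j).card)
  have hneg : (Finset.univ.filter fun j =>
      ¬ k ≤ (Finset.univ.filter fun i => v i < v j).card) =
      (Finset.univ.filter fun j => v j ≤ orderStat v k) := by
    apply Finset.filter_congr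
    intro j _
    simp only [not_le]
    exact (le_orderStat_iff v hk1 hkm (v j)).symm
  rw [hneg] at hpart
  have := orderStat_count_ge v hk1 hkm
  simp only [Finset.card_univ, Fintype.card_fin] at hpart
  omega

lemma card_filter_perm {m : ℕ} (π : Equiv.Perm (Fin m)) (q : Fin m → Prop) [DecidablePred q] :
    (Finset.univ.filter fun i => q (π i)).card = (Finset.univ.filter q).card := by
  apply Finset.card_bij' (fun i _ => π i) (fun i _ => π.symm i) <;> simp

/-- Split conformal prediction, canonical form (Proposition 1).  Let
`(X 1, Y 1), …, (X (n+1), Y (n+1))` be exchangeable random pairs with values in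
`ℝ^d × ℝ`, let `ρ` be a measurable conformity function, `R i = ρ (X i) (Y i)` the
conformity scores, `0 < α < 1` with `⌈(1−α)(n+1)⌉ ≤ n`, and let `r̂` be the
`⌈(1−α)(n+1)⌉`-th order statistic of `R 1, …, R n`.  Then
`Pr(Y (n+1) ∈ C (X (n+1))) ≥ 1 − α`, where `C x = {y : ρ x y ≤ r̂}`. -/
theorem split_conformal_marginal_validity {Ω : Type*} [MeasurableSpace Ω]
    (P : Measure Ω) [IsProbabilityMeasure P] (d n : ℕ)
    (X : Fin (n + 1) → Ω → (Fin d → ℝ)) (Y : Fin (n + 1) → Ω → ℝ)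
    (hX : ∀ i, Measurable (X i)) (hY : ∀ i, Measurable (Y i))
    (hexch : ∀ π : Equiv.Perm (Fin (n + 1)),
      Measure.map (fun ω => fun i => (X (π i) ω, Y (π i) ω)) P =
        Measure.map (fun ω => fun i => (X i ω, Y i ω)) P)
    (ρ : (Fin d → ℝ) → ℝ → ℝ) (hρ : Measurable (Function.uncurry ρ))
    (α : ℝ) (hα0 : 0 < α) (hα1 : α < 1)
    (hceil : ⌈(1 - α) * ((n : ℝ) + 1)⌉₊ ≤ n) :
    ENNReal.ofReal (1 - α) ≤
      P {ω | Y (Fin.last n) ω ∈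
        {y : ℝ | ρ (X (Fin.last n) ω) y ≤
          orderStat (fun i : Fin n => ρ (X i.castSucc ω) (Y i.castSucc ω))
            ⌈(1 - α) * ((n : ℝ) + 1)⌉₊}} := by
  set k := ⌈(1 - α) * ((n : ℝ) + 1)⌉₊ with hkdef
  have hk1 : 1 ≤ k := by
    rw [hkdef]
    rw [Nat.one_le_ceil_iff]
    have : (0:ℝ) < 1 - α := by linarith
    positivity
  set R : Fin (n + 1) → Ω → ℝ := fun i ω => ρ (X i ω) (Y i ω) with hRdef
  have hR : ∀ i, Measurable (R i) := fun i => hρ.comp ((hX i).prodMk (hY i))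
  set E : Fin (n + 1) → Set Ω := fun j =>
    {ω | k ≤ (Finset.univ.filter fun i => R i ω < R j ω).card} with hEdef
  have hEmeas : ∀ j, MeasurableSet (E j) := by
    intro j
    have hcard : Measurable (fun ω => (Finset.univ.filter fun i => R i ω < R j ω).card) := by
      have heq : (fun ω => (Finset.univ.filter fun i => R i ω < R j ω).card) =
          fun ω => ∑ i : Fin (n+1), if R i ω < R j ω then 1 else 0 := by
        funext ω; exact Finset.card_filter _ _
      rw [heq]
      exact Finset.measurable_sum _ fun i _ =>
        Measurable.ite (measurableSet_lt (hR i) (hR j)) measurable_const measurable_const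
    exact hcard measurableSet_Ici
  -- The key permutation-invariant measurable set
  set T : Set (Fin (n + 1) → (Fin d → ℝ) × ℝ) :=
    {z | k ≤ (Finset.univ.filter fun i =>
      Function.uncurry ρ (z i) < Function.uncurry ρ (z (Fin.last n))).card} with hTdef
  have hTmeas : MeasurableSet T := by
    have hcard : Measurable (fun z : Fin (n + 1) → (Fin d → ℝ) × ℝ =>
        (Finset.univ.filter fun i =>
          Function.uncurry ρ (z i) < Function.uncurry ρ (z (Fin.last n))).card) := by
      have heq : (fun z : Fin (n + 1) → (Fin d → ℝ) × ℝ =>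
          (Finset.univ.filter fun i =>
            Function.uncurry ρ (z i) < Function.uncurry ρ (z (Fin.last n))).card) =
          fun z => ∑ i : Fin (n+1),
            if Function.uncurry ρ (z i) < Function.uncurry ρ (z (Fin.last n))
            then 1 else 0 := by
        funext z; exact Finset.card_filter _ _
      rw [heq]
      exact Finset.measurable_sum _ fun i _ =>
        Measurable.ite (measurableSet_lt (hρ.comp (measurable_pi_apply i))
          (hρ.comp (measurable_pi_apply (Fin.last n)))) measurable_const measurable_const
    exact hcard measurableSet_Ici
  have hpre : ∀ π : Equiv.Perm (Fin (n + 1)),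
      (fun ω => fun i => (X (π i) ω, Y (π i) ω)) ⁻¹' T =
        {ω | k ≤ (Finset.univ.filter fun i => R i ω < R (π (Fin.last n)) ω).card} := by
    intro π
    ext ω
    simp only [Set.mem_preimage, hTdef, Set.mem_setOf_eq, Function.uncurry_apply_pair]
    rw [← card_filter_perm π (fun i => R i ω < R (π (Fin.last n)) ω)]
    exact Iff.rfl
  have hFmeas : ∀ π : Equiv.Perm (Fin (n + 1)),
      Measurable (fun ω => fun i : Fin (n+1) => (X (π i) ω, Y (π i) ω)) := fun π =>
    measurable_pi_lambda _ fun i => (hX _).prodMk (hY _)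
  have hPE : ∀ j, P (E j) = P (E (Fin.last n)) := by
    intro j
    have h1 : E j = (fun ω => fun i => (X ((Equiv.swap j (Fin.last n)) i) ω,
        Y ((Equiv.swap j (Fin.last n)) i) ω)) ⁻¹' T := by
      rw [hpre (Equiv.swap j (Fin.last n)), Equiv.swap_apply_right]
    have h2 : E (Fin.last n) = (fun ω => fun i => (X i ω, Y i ω)) ⁻¹' T := by
      have := hpre (Equiv.refl (Fin (n+1)))
      simp only [Equiv.refl_apply] at this
      exact this.symm
    rw [h1, h2]
    rw [← Measure.map_apply (hFmeas (Equiv.swap j (Fin.last n))) hTmeas,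
      hexch (Equiv.swap j (Fin.last n)),
      Measure.map_apply (by simpa using hFmeas (Equiv.refl (Fin (n+1)))) hTmeas]
  -- sum of probabilities bound
  have hkn1 : k ≤ n + 1 := by omega
  have hsum : ∑ j : Fin (n+1), P (E j) ≤ ((n + 1 - k : ℕ) : ℝ≥0∞) := by
    have h1 : ∑ j : Fin (n+1), P (E j) =
        ∫⁻ ω, ∑ j : Fin (n+1), (E j).indicator 1 ω ∂P := by
      rw [lintegral_finset_sum _ fun j _ => measurable_one.indicator (hEmeas j)]
      simp_rw [lintegral_indicator_one (hEmeas _)]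
    rw [h1]
    calc ∫⁻ ω, ∑ j : Fin (n+1), (E j).indicator 1 ω ∂P
        ≤ ∫⁻ _, ((n + 1 - k : ℕ) : ℝ≥0∞) ∂P := by
          apply lintegral_mono
          intro ω
          have hcard := count_high_rank_le (fun i => R i ω) hk1 hkn1
          have heq : ∑ j : Fin (n+1), (E j).indicator (1 : Ω → ℝ≥0∞) ω =
              ((Finset.univ.filter fun j : Fin (n+1) =>
                k ≤ (Finset.univ.filter fun i => R i ω < R j ω).card).card : ℝ≥0∞) := by
            rw [Finset.card_filter]
            push_cast
            apply Finset.sum_congr rfl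
            intro j _
            simp [Set.indicator_apply, hEdef, Set.mem_setOf_eq]
          show ∑ j : Fin (n+1), (E j).indicator 1 ω ≤ ((n + 1 - k : ℕ) : ℝ≥0∞)
          rw [heq]
          exact_mod_cast Nat.cast_le.mpr hcard
      _ = ((n + 1 - k : ℕ) : ℝ≥0∞) := by simp
  have hconst : ∑ j : Fin (n+1), P (E j) = (n + 1 : ℕ) * P (E (Fin.last n)) := by
    rw [Finset.sum_congr rfl fun j _ => hPE j, Finset.sum_const, Finset.card_univ,
      Fintype.card_fin, nsmul_eq_mul]
  rw [hconst] at hsum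
  have hub : ((n + 1 - k : ℕ) : ℝ≥0∞) ≤ ((n + 1 : ℕ) : ℝ≥0∞) * ENNReal.ofReal α := by
    rw [← ENNReal.ofReal_natCast (n + 1 - k), ← ENNReal.ofReal_natCast (n + 1),
      ← ENNReal.ofReal_mul (by positivity)]
    apply ENNReal.ofReal_le_ofReal
    have hceil' : (1 - α) * ((n : ℝ) + 1) ≤ (k : ℝ) := Nat.le_ceil _
    rw [Nat.cast_sub hkn1]
    push_cast
    nlinarith
  have hPle : P (E (Fin.last n)) ≤ ENNReal.ofReal α := by
    have h := le_trans hsum hub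
    rwa [ENNReal.mul_le_mul_iff_right (by simp) (by simp)] at h
  -- identify the target event with the complement of E (last n)
  have hset : {ω | Y (Fin.last n) ω ∈
      {y : ℝ | ρ (X (Fin.last n) ω) y ≤
        orderStat (fun i : Fin n => ρ (X i.castSucc ω) (Y i.castSucc ω)) k}} =
      (E (Fin.last n))ᶜ := by
    ext ω
    simp only [Set.mem_setOf_eq, Set.mem_compl_iff, hEdef, not_le]
    rw [le_orderStat_iff (fun i : Fin n => ρ (X i.castSucc ω) (Y i.castSucc ω)) hk1 hceil]
    have hcards : (Finset.univ.filter fun i : Fin n =>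
        ρ (X i.castSucc ω) (Y i.castSucc ω) < R (Fin.last n) ω).card =
        (Finset.univ.filter fun i : Fin (n+1) => R i ω < R (Fin.last n) ω).card := by
      rw [Finset.card_filter, Finset.card_filter, Fin.sum_univ_castSucc]
      simp [hRdef]
    rw [hRdef] at hcards
    simp only [hRdef]
    rw [hcards]
  rw [hset]
  rw [measure_compl (hEmeas _) (measure_ne_top P _), measure_univ]
  have h1 : ENNReal.ofReal (1 - α) = 1 - ENNReal.ofReal α := by
    rw [ENNReal.ofReal_sub _ hα0.le, ENNReal.ofReal_one]
  rw [h1]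
  exact tsub_le_tsub_left hPle 1
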